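/- arXiv:1510.07573 — 2 statements merged into one kernel-verified Lean document; each statement's English description precedes it below -/
import Mathlib

section
/- Let agent f1 move with speed v¹ > 0 along the positive y-direction and agent f2 move with speed v² > 0 in direction (−sin Ψ, cos Ψ), with sin Ψ ≠ 0, so their straight-line trajectories intersect at the origin. Suppose f2 reaches the origin strictly before f1 (i.e., at the moment f2 is at the origin, f1 is at (0, d) with d < 0). Then at every time before f2 reaches the origin, the azimuthal position φ₂₁ of f2 relative to f1 (measured with φ = 0 pointing along f1's heading, positive angles to f1's left) and the angular velocity φ̇₂₁ satisfy φ̇₂₁ · φ₂₁ ≤ 0 (regressive motion), while at every time after f2 passes the origin, φ̇₂₁ · φ₂₁ ≥ 0 (progressive motion). -/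
open Real

/-- The azimuth of a planar vector `p` measured from the heading direction (0,1),
positive to the left, taking values in [-π, π). -/
noncomputable def azimuth (p : ℝ × ℝ) : ℝ :=
  if Complex.arg ⟨p.2, -p.1⟩ = π then -π else Complex.arg ⟨p.2, -p.1⟩

lemma arg_mk_of_im_pos (x y : ℝ) (hy : 0 < y) :
    Complex.arg ⟨x, y⟩ = π / 2 - Real.arctan (x / y) := by
  have hu := Real.arctan_lt_pi_div_two (x / y)
  have hu' := Real.neg_pi_div_two_lt_arctan (x / y)
  have hpi := Real.pi_pos
  have hr : (0:ℝ) < Real.sqrt (x ^ 2 + y ^ 2) := by positivity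
  have hθ : π / 2 - Real.arctan (x / y) ∈ Set.Ioc (-π) π := by
    constructor <;> [linarith; linarith]
  rw [← Complex.arg_mul_cos_add_sin_mul_I hr hθ]
  congr 1
  have hsq : (0:ℝ) < Real.sqrt (1 + (x / y) ^ 2) := by positivity
  have hs : Real.sqrt (x ^ 2 + y ^ 2) = y * Real.sqrt (1 + (x / y) ^ 2) := by
    rw [show y * Real.sqrt (1 + (x / y) ^ 2) = Real.sqrt (y ^ 2 * (1 + (x / y) ^ 2)) by
      rw [Real.sqrt_mul (sq_nonneg y), Real.sqrt_sq hy.le]]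
    congr 1
    field_simp
    ring
  apply Complex.ext <;>
    simp only [Complex.mul_re, Complex.mul_im, Complex.add_re, Complex.add_im,
      Complex.ofReal_re, Complex.ofReal_im, Complex.I_re, Complex.I_im,
      Complex.cos_ofReal_re, Complex.sin_ofReal_re, Complex.cos_ofReal_im,
      Complex.sin_ofReal_im, Real.cos_pi_div_two_sub, Real.sin_pi_div_two_sub,
      Real.sin_arctan, Real.cos_arctan, hs]
  · field_simp
    ring
  · field_simp
    ring

lemma arg_mk_of_im_neg (x y : ℝ) (hy : y < 0) :
    Complex.arg ⟨x, y⟩ = -(π / 2) - Real.arctan (x / y) := by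
  have h := arg_mk_of_im_pos x (-y) (by linarith)
  have hc : (starRingEnd ℂ) ⟨x, -y⟩ = ⟨x, y⟩ := by
    apply Complex.ext <;> simp
  have harg := Complex.arg_conj ⟨x, -y⟩
  have hu' := Real.neg_pi_div_two_lt_arctan (x / -y)
  have hpi := Real.pi_pos
  have hne : Complex.arg ⟨x, -y⟩ ≠ π := by rw [h]; intro hE; linarith
  rw [if_neg hne, hc, h] at harg
  rw [harg, div_neg, Real.arctan_neg]
  ring

lemma azimuth_pos_case (a b d t : ℝ) (h : 0 < a * t) :
    azimuth (-(a * t), b * t - d) = π / 2 - Real.arctan ((b * t - d) / (a * t)) := by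
  have harg := arg_mk_of_im_pos (b * t - d) (a * t) h
  have h1 := Real.neg_pi_div_two_lt_arctan ((b * t - d) / (a * t))
  have hpi := Real.pi_pos
  have hne : Complex.arg ⟨b * t - d, a * t⟩ ≠ π := by rw [harg]; intro hE; linarith
  have hp : (⟨((-(a * t), b * t - d) : ℝ × ℝ).2, -((-(a * t), b * t - d) : ℝ × ℝ).1⟩ : ℂ)
      = ⟨b * t - d, a * t⟩ := by norm_num
  unfold azimuth
  rw [hp, if_neg hne, harg]

lemma azimuth_neg_case (a b d t : ℝ) (h : a * t < 0) :
    azimuth (-(a * t), b * t - d) = -(π / 2) - Real.arctan ((b * t - d) / (a * t)) := by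
  have harg := arg_mk_of_im_neg (b * t - d) (a * t) h
  have h1 := Real.neg_pi_div_two_lt_arctan ((b * t - d) / (a * t))
  have hpi := Real.pi_pos
  have hne : Complex.arg ⟨b * t - d, a * t⟩ ≠ π := by rw [harg]; intro hE; linarith
  have hp : (⟨((-(a * t), b * t - d) : ℝ × ℝ).2, -((-(a * t), b * t - d) : ℝ × ℝ).1⟩ : ℂ)
      = ⟨b * t - d, a * t⟩ := by norm_num
  unfold azimuth
  rw [hp, if_neg hne, harg]

lemma azimuth_hasDerivAt (a b d t₀ : ℝ) (ha : a * t₀ ≠ 0) :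
    HasDerivAt (fun t => azimuth (-(a * t), b * t - d))
      (a * (-d) / ((a * t₀) ^ 2 + (b * t₀ - d) ^ 2)) t₀ := by
  have hcont : Continuous fun t : ℝ => a * t := by fun_prop
  have hu : HasDerivAt (fun t => (b * t - d) / (a * t))
      ((b * (a * t₀) - (b * t₀ - d) * a) / (a * t₀) ^ 2) t₀ := by
    exact HasDerivAt.div (by simpa using ((hasDerivAt_id t₀).const_mul b).sub_const d)
      (by simpa using (hasDerivAt_id t₀).const_mul a) ha
  have harc := hu.arctan
  have hD : -(1 / (1 + ((b * t₀ - d) / (a * t₀)) ^ 2) *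
        ((b * (a * t₀) - (b * t₀ - d) * a) / (a * t₀) ^ 2))
      = a * (-d) / ((a * t₀) ^ 2 + (b * t₀ - d) ^ 2) := by
    have h2 : (a * t₀) ^ 2 + (b * t₀ - d) ^ 2 ≠ 0 := by positivity
    have ha0 : a ≠ 0 := left_ne_zero_of_mul ha
    have ht0 : t₀ ≠ 0 := right_ne_zero_of_mul ha
    have h3 : 1 + ((b * t₀ - d) / (a * t₀)) ^ 2
        = ((a * t₀) ^ 2 + (b * t₀ - d) ^ 2) / (a * t₀) ^ 2 := by
      field_simp
    rw [h3]
    field_simp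
    ring
  rcases ha.lt_or_gt with hneg | hpos
  · have hS : ∀ᶠ t in nhds t₀, a * t < 0 :=
      (hcont.tendsto t₀).eventually (eventually_lt_nhds hneg)
    have heq : (fun t => -(π / 2) - Real.arctan ((b * t - d) / (a * t)))
        =ᶠ[nhds t₀] fun t => azimuth (-(a * t), b * t - d) :=
      hS.mono fun t ht => (azimuth_neg_case a b d t ht).symm
    have hf := harc.const_sub (-(π / 2))
    have := hf.congr_of_eventuallyEq heq.symm
    rwa [hD] at this
  · have hS : ∀ᶠ t in nhds t₀, 0 < a * t :=
      (hcont.tendsto t₀).eventually (eventually_gt_nhds hpos)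
    have heq : (fun t => π / 2 - Real.arctan ((b * t - d) / (a * t)))
        =ᶠ[nhds t₀] fun t => azimuth (-(a * t), b * t - d) :=
      hS.mono fun t ht => (azimuth_pos_case a b d t ht).symm
    have hf := harc.const_sub (π / 2)
    have := hf.congr_of_eventuallyEq heq.symm
    rwa [hD] at this

/-- f1 moves with speed v¹ > 0 along the positive y-direction, f2 with speed
v² > 0 in direction (−sin Ψ, cos Ψ), sin Ψ ≠ 0; trajectories intersect at the origin; f2 is
at the origin at time 0 while f1 is then at (0, d), d < 0 (so f2 arrives first).  Then at
every time before f2 reaches the origin the azimuth φ₂₁ of f2 relative to f1 and its angular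
velocity satisfy φ̇₂₁·φ₂₁ ≤ 0 (regressive motion), and at every time afterwards
φ̇₂₁·φ₂₁ ≥ 0 (progressive motion). -/
theorem regressive_before_progressive_after
    (v1 v2 Ψ d : ℝ) (hv1 : 0 < v1) (hv2 : 0 < v2) (hΨ : Real.sin Ψ ≠ 0) (hd : d < 0)
    (x1 x2 : ℝ → ℝ × ℝ)
    (hx1 : ∀ t, x1 t = (0, d + v1 * t))
    (hx2 : ∀ t, x2 t = (-(v2 * t) * Real.sin Ψ, (v2 * t) * Real.cos Ψ))
    (hnc : ∀ t, x2 t ≠ x1 t)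
    (φ φdot : ℝ → ℝ)
    (hφ : ∀ t, φ t = azimuth ((x2 t).1 - (x1 t).1, (x2 t).2 - (x1 t).2))
    (hder : ∀ t, HasDerivAt φ (φdot t) t) :
    (∀ t, t < 0 → φdot t * φ t ≤ 0) ∧ (∀ t, 0 < t → 0 ≤ φdot t * φ t) := by
  set A : ℝ := v2 * Real.sin Ψ with hA_def
  set B : ℝ := v2 * Real.cos Ψ - v1 with hB_def
  have hA : A ≠ 0 := mul_ne_zero hv2.ne' hΨ
  have hφ' : ∀ t, φ t = azimuth (-(A * t), B * t - d) := by
    intro t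
    have h1 : (x2 t).1 - (x1 t).1 = -(A * t) := by
      rw [hx1 t, hx2 t]; show -(v2 * t) * Real.sin Ψ - 0 = _; rw [hA_def]; ring
    have h2 : (x2 t).2 - (x1 t).2 = B * t - d := by
      rw [hx1 t, hx2 t]; show (v2 * t) * Real.cos Ψ - (d + v1 * t) = _; rw [hB_def]; ring
    rw [hφ t, h1, h2]
  have hfun : φ = fun t => azimuth (-(A * t), B * t - d) := funext hφ'
  have hkey : ∀ t : ℝ, t ≠ 0 → φdot t = A * (-d) / ((A * t) ^ 2 + (B * t - d) ^ 2) := by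
    intro t ht
    have hD := azimuth_hasDerivAt A B d t (mul_ne_zero hA ht)
    rw [← hfun] at hD
    exact (hder t).unique hD
  have harct : ∀ x : ℝ, -(π / 2) < Real.arctan x ∧ Real.arctan x < π / 2 := fun x =>
    ⟨Real.neg_pi_div_two_lt_arctan x, Real.arctan_lt_pi_div_two x⟩
  constructor
  · intro t ht
    have hP : (0:ℝ) < (A * t) ^ 2 + (B * t - d) ^ 2 := by
      have : A * t ≠ 0 := mul_ne_zero hA ht.ne
      positivity
    rw [hkey t ht.ne, hφ' t]
    rcases hA.lt_or_gt with hAneg | hApos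
    · have hat : 0 < A * t := mul_pos_of_neg_of_neg hAneg ht
      rw [azimuth_pos_case A B d t hat]
      have h1 := (harct ((B * t - d) / (A * t))).2
      have hdot : A * (-d) / ((A * t) ^ 2 + (B * t - d) ^ 2) < 0 :=
        div_neg_of_neg_of_pos (mul_neg_of_neg_of_pos hAneg (by linarith)) hP
      have hphi : 0 < π / 2 - Real.arctan ((B * t - d) / (A * t)) := by linarith
      exact le_of_lt (mul_neg_of_neg_of_pos hdot hphi)
    · have hat : A * t < 0 := mul_neg_of_pos_of_neg hApos ht
      rw [azimuth_neg_case A B d t hat]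
      have h1 := (harct ((B * t - d) / (A * t))).1
      have hdot : 0 < A * (-d) / ((A * t) ^ 2 + (B * t - d) ^ 2) :=
        div_pos (mul_pos hApos (by linarith)) hP
      have hphi : -(π / 2) - Real.arctan ((B * t - d) / (A * t)) < 0 := by linarith
      exact le_of_lt (mul_neg_of_pos_of_neg hdot hphi)
  · intro t ht
    have hP : (0:ℝ) < (A * t) ^ 2 + (B * t - d) ^ 2 := by
      have : A * t ≠ 0 := mul_ne_zero hA ht.ne'
      positivity
    rw [hkey t ht.ne', hφ' t]
    rcases hA.lt_or_gt with hAneg | hApos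
    · have hat : A * t < 0 := mul_neg_of_neg_of_pos hAneg ht
      rw [azimuth_neg_case A B d t hat]
      have h1 := (harct ((B * t - d) / (A * t))).1
      have hdot : A * (-d) / ((A * t) ^ 2 + (B * t - d) ^ 2) < 0 :=
        div_neg_of_neg_of_pos (mul_neg_of_neg_of_pos hAneg (by linarith)) hP
      have hphi : -(π / 2) - Real.arctan ((B * t - d) / (A * t)) < 0 := by linarith
      exact le_of_lt (mul_pos_of_neg_of_neg hdot hphi)
    · have hat : 0 < A * t := mul_pos hApos ht
      rw [azimuth_pos_case A B d t hat]
      have h1 := (harct ((B * t - d) / (A * t))).2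
      have hdot : 0 < A * (-d) / ((A * t) ^ 2 + (B * t - d) ^ 2) :=
        div_pos (mul_pos hApos (by linarith)) hP
      have hphi : 0 < π / 2 - Real.arctan ((B * t - d) / (A * t)) := by linarith
      exact le_of_lt (mul_pos hdot hphi)
end

section
/- Consider an observer at the origin with heading (0,1) and GRM cone of half-angle CVA ∈ (0, π/2), moving with velocity v(sin α, cos α) toward the wall y = y₀ > 0, with 0 < α < π/2. If α < CVA, then the impact point lies strictly inside the GRM cone, and there exist wall-points within the cone (azimuth in (−CVA, CVA)) whose angular velocity magnitude exceeds any given threshold T > 0 for y₀ sufficiently small. Hence for every finite GRM threshold the agent perceives above-threshold GRM before reaching the wall. -/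
open Real

lemma azimuth_eq {p : ℝ × ℝ} {θ : ℝ} (h : Complex.arg ⟨p.2, -p.1⟩ = θ) (hθ : θ ≠ π) :
    azimuth p = θ := by
  unfold azimuth; rw [h, if_neg hθ]

/-- An observer at the origin with heading (0,1) and GRM cone of half-angle
CVA ∈ (0, π/2) moves with velocity u = v(sin α, cos α) (v > 0, 0 < α < π/2, α < CVA)
toward the wall y = y₀ > 0.  Then the impact point (y₀ tan α, y₀) lies strictly inside the
GRM cone, and for every threshold T > 0 there is δ > 0 such that for every
y₀ ∈ (0, δ) some wall-point (x, y₀) has azimuth in (−CVA, CVA), angular velocity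
φ̇ = ⟨(−u)^⊥, (x, y₀)⟩/‖(x, y₀)‖² (with (a,b)^⊥ = (−b, a)) of magnitude exceeding T, and
satisfies the GRM condition (φ̇ > 0 ∧ azimuth ≤ CVA) ∨ (φ̇ < 0 ∧ −CVA ≤ azimuth):
the agent perceives above-threshold GRM before reaching the wall. -/
theorem GRM_perceived_before_wall
    (v α CVA : ℝ) (hv : 0 < v) (hα : α ∈ Set.Ioo 0 (π / 2))
    (hCVA : CVA ∈ Set.Ioo 0 (π / 2)) (hαCVA : α < CVA)
    (u : ℝ × ℝ) (hu : u = (v * Real.sin α, v * Real.cos α))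
    (φdot : ℝ → ℝ → ℝ)
    (hφdot : ∀ x y : ℝ,
      φdot x y = ((-(-u).2) * x + (-u).1 * y) / (x ^ 2 + y ^ 2)) :
    (∀ y₀ : ℝ, 0 < y₀ → |azimuth (y₀ * Real.tan α, y₀)| < CVA) ∧
    (∀ T : ℝ, 0 < T → ∃ δ : ℝ, 0 < δ ∧ ∀ y₀ : ℝ, 0 < y₀ → y₀ < δ → ∃ x : ℝ,
      azimuth (x, y₀) ∈ Set.Ioo (-CVA) CVA ∧
      T < |φdot x y₀| ∧
      ((0 < φdot x y₀ ∧ azimuth (x, y₀) ≤ CVA) ∨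
       (φdot x y₀ < 0 ∧ -CVA ≤ azimuth (x, y₀)))) := by
  obtain ⟨hα0, hα2⟩ := hα
  obtain ⟨hC0, hC2⟩ := hCVA
  have hπ : (0 : ℝ) < π := Real.pi_pos
  have hcos : 0 < Real.cos α := Real.cos_pos_of_mem_Ioo ⟨by linarith, hα2⟩
  have hsin : 0 < Real.sin α := Real.sin_pos_of_pos_of_lt_pi hα0 (by linarith)
  have haz0 : ∀ y₀ : ℝ, 0 < y₀ → azimuth (0, y₀) = 0 := by
    intro y₀ hy₀
    apply azimuth_eq _ (by intro h; linarith)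
    have heq : (⟨((0:ℝ), y₀).2, -((0:ℝ), y₀).1⟩ : ℂ) = (y₀ : ℂ) := by
      apply Complex.ext <;> simp
    rw [heq]
    exact Complex.arg_ofReal_of_nonneg hy₀.le
  constructor
  · intro y₀ hy₀
    have hr : 0 < y₀ / Real.cos α := div_pos hy₀ hcos
    have haz : azimuth (y₀ * Real.tan α, y₀) = -α := by
      apply azimuth_eq _ (by intro h; linarith)
      have heq : (⟨(y₀ * Real.tan α, y₀).2, -(y₀ * Real.tan α, y₀).1⟩ : ℂ) =
          (y₀ / Real.cos α : ℝ) *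
            ((Real.cos (-α) : ℝ) + (Real.sin (-α) : ℝ) * Complex.I) := by
        simp only [Complex.ext_iff, Complex.add_re, Complex.add_im, Complex.mul_re,
          Complex.mul_im, Complex.ofReal_re, Complex.ofReal_im, Complex.I_re, Complex.I_im,
          Real.cos_neg, Real.sin_neg, Real.tan_eq_sin_div_cos]
        constructor <;> field_simp <;> ring
      rw [heq, Complex.ofReal_cos, Complex.ofReal_sin]
      exact Complex.arg_mul_cos_add_sin_mul_I hr ⟨by linarith, by linarith⟩
    rw [haz, abs_neg, abs_of_pos hα0]
    exact hαCVA
  · intro T hT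
    refine ⟨v * Real.sin α / T, by positivity, ?_⟩
    intro y₀ hy₀ hy₀δ
    have hφ : φdot 0 y₀ = -(v * Real.sin α) / y₀ := by
      rw [hφdot, hu]
      field_simp
      simp only [Prod.neg_mk]
      ring
    refine ⟨0, ?_, ?_, ?_⟩
    · rw [haz0 y₀ hy₀]
      exact ⟨by linarith, hC0⟩
    · rw [hφ, abs_div, abs_neg, abs_of_pos (by positivity), abs_of_pos hy₀,
        lt_div_iff₀ hy₀]
      calc T * y₀ < T * (v * Real.sin α / T) := mul_lt_mul_of_pos_left hy₀δ hT
        _ = v * Real.sin α := by field_simp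
    · right
      refine ⟨?_, by rw [haz0 y₀ hy₀]; linarith⟩
      rw [hφ]
      apply div_neg_of_neg_of_pos _ hy₀
      simp only [neg_neg, neg_lt, neg_zero]
      positivity
end
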